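/- Let R be a (not necessarily commutative) ring and M a totally ordered cancellative commutative monoid. If I is a left ideal of the monoid-ring R[M] whose annihilator is nonzero, then there exists a nonzero element a ∈ R such that (a ε_0) · I = 0, where 0 is the identity of M. -/

import Mathlib

/-- If `I` is an unfaithful left ideal of the monoid-ring `R[M]` with `M` a totally ordered
cancellative commutative monoid, then `a I = 0` for some nonzero `a ∈ R` (viewed as the
element `a ε₀` of `R[M]`). -/
theorem monoidAlgebra_unfaithful_left_ideal_killed_by_scalar
    {R : Type*} [Ring R] {M : Type*} [AddCommMonoid M] [LinearOrder M] [IsOrderedCancelAddMonoid M]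
    (I : Ideal (AddMonoidAlgebra R M))
    (h : ∃ c : AddMonoidAlgebra R M, c ≠ 0 ∧ ∀ x ∈ I, c * x = 0) :
    ∃ a : R, a ≠ 0 ∧ ∀ x ∈ I, AddMonoidAlgebra.single (0 : M) a * x = 0 := by
  classical
  -- choose a nonzero annihilator with support of minimal cardinality
  have hQ : ∃ k : ℕ, ∃ c : AddMonoidAlgebra R M,
      c ≠ 0 ∧ (∀ x ∈ I, c * x = 0) ∧ c.coeff.support.card = k := by
    obtain ⟨c, hc0, hc⟩ := h
    exact ⟨c.coeff.support.card, c, hc0, hc, rfl⟩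
  obtain ⟨c, hc0, hc, hck⟩ := Nat.find_spec hQ
  have hmin : ∀ c' : AddMonoidAlgebra R M, c' ≠ 0 → (∀ x ∈ I, c' * x = 0) →
      ¬ c'.coeff.support.card < c.coeff.support.card := by
    intro c' hc'0 hc' hlt
    rw [hck] at hlt
    exact Nat.find_min hQ hlt ⟨c', hc'0, hc', rfl⟩
  have hsupp : c.coeff.support.Nonempty := Finsupp.support_nonempty_iff.mpr (AddMonoidAlgebra.coeff_eq_zero.not.mpr hc0)
  set m : M := c.coeff.support.max' hsupp with hm
  have hmmem : m ∈ c.coeff.support := c.coeff.support.max'_mem hsupp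
  have ha0 : c.coeff m ≠ 0 := Finsupp.mem_support_iff.mp hmmem
  refine ⟨c.coeff m, ha0, ?_⟩
  intro x hx
  -- key claim: every coefficient of `c` kills every coefficient of `x`
  have key : ∀ q ∈ x.coeff.support, ∀ p, c.coeff p * x.coeff q = 0 := by
    by_contra hT
    push_neg at hT
    set T : Finset M := x.coeff.support.filter (fun q => ∃ p, c.coeff p * x.coeff q ≠ 0) with hTdef
    have hTne : T.Nonempty := by
      obtain ⟨q, hq, p, hp⟩ := hT
      exact ⟨q, Finset.mem_filter.mpr ⟨hq, p, hp⟩⟩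
    set n : M := T.max' hTne with hn
    have hnmem : n ∈ T := T.max'_mem hTne
    obtain ⟨hnx, p₀, hp₀⟩ := Finset.mem_filter.mp hnmem
    -- coefficients larger than n are killed by all of c
    have hgt : ∀ q ∈ x.coeff.support, n < q → ∀ p, c.coeff p * x.coeff q = 0 := by
      intro q hq hlt p
      by_contra hne
      have : q ∈ T := Finset.mem_filter.mpr ⟨hq, p, hne⟩
      exact absurd (T.le_max' q this) (not_le.mpr hlt)
    -- compute the coefficient of c * x at m + n
    have hcx : (c * x).coeff (m + n) = 0 := by rw [hc x hx]; rfl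
    have hsum : (c * x).coeff (m + n) = c.coeff m * x.coeff n := by
      rw [AddMonoidAlgebra.mul_apply]
      rw [Finsupp.sum]
      rw [Finset.sum_eq_single m]
      · rw [Finsupp.sum]
        rw [Finset.sum_eq_single n]
        · rw [if_pos rfl]
        · intro q hq hqn
          rcases eq_or_ne (m + q) (m + n) with he | he
          · exact absurd (add_left_cancel he) hqn
          · exact if_neg he
        · intro hn'
          rw [Finsupp.notMem_support_iff.mp hn', mul_zero, if_pos rfl]
      · intro p hp hpm
        rw [Finsupp.sum]
        apply Finset.sum_eq_zero
        intro q hq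
        rcases eq_or_ne (p + q) (m + n) with he | he
        · rw [if_pos he]
          -- p ≤ m, so q ≥ n; and q = n would force p = m
          have hple : p ≤ m := c.coeff.support.le_max' p hp
          have hnq : n ≤ q := by
            have : m + n ≤ m + q := by
              calc m + n = p + q := he.symm
                _ ≤ m + q := add_le_add_left hple q
            exact le_of_add_le_add_left this
          rcases lt_or_eq_of_le hnq with hlt | heq
          · exact hgt q hq hlt p
          · exfalso
            apply hpm
            rw [← heq] at he
            exact add_right_cancel he
        · exact if_neg he
      · intro hm'
        exact absurd hmmem hm'
    have han : c.coeff m * x.coeff n = 0 := by rw [← hsum]; exact hcx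
    -- form c' = c * single 0 (x n); it annihilates I and has strictly smaller support
    set c' : AddMonoidAlgebra R M := c * AddMonoidAlgebra.single (0 : M) (x.coeff n) with hc'def
    have hc'app : ∀ p, c'.coeff p = c.coeff p * x.coeff n := fun p =>
      AddMonoidAlgebra.coeff_mul_single_zero c (x.coeff n) p
    have hc'0 : c' ≠ 0 := by
      intro hzero
      apply hp₀
      rw [← hc'app p₀, hzero]
      rfl
    have hc'ann : ∀ y ∈ I, c' * y = 0 := by
      intro y hy
      rw [hc'def, mul_assoc]
      exact hc (AddMonoidAlgebra.single (0 : M) (x.coeff n) * y) (I.mul_mem_left _ hy)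
    have hsub : c'.coeff.support ⊆ c.coeff.support := by
      intro p hp
      rw [Finsupp.mem_support_iff] at hp ⊢
      intro hcp
      apply hp
      rw [hc'app, hcp, zero_mul]
    have hmnot : m ∉ c'.coeff.support := by
      rw [Finsupp.notMem_support_iff, hc'app]
      exact han
    have hcard : c'.coeff.support.card < c.coeff.support.card :=
      Finset.card_lt_card (Finset.ssubset_iff_of_subset hsub |>.mpr ⟨m, hmmem, hmnot⟩)
    exact hmin c' hc'0 hc'ann hcard
  -- conclude
  ext q
  rw [AddMonoidAlgebra.coeff_single_zero_mul]
  rcases eq_or_ne (x.coeff q) 0 with hq | hq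
  · rw [hq, mul_zero]
    rfl
  · have := key q (Finsupp.mem_support_iff.mpr hq) m
    rw [this]
    rfl
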